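/- Every point x of the convex hull conv(h) of a closed subset h of the unit circle that lies in the open unit disk has a neighborhood in conv(h) contained in the convex hull of finitely many points of h. Consequently, every compact subset of conv(h) ∩ int(B²) lies in the convex hull of a finite subset of h. -/

import Mathlib

open Set Function Topology Metric RealInnerProductSpace

/-- The plane. -/
abbrev Plane := EuclideanSpace ℝ (Fin 2)

noncomputable def rotJ (p : Plane) : Plane := WithLp.toLp 2 ![-p 1, p 0]

lemma key_ineq (a b c e : ℝ) (h1 : a^2+b^2 = 1) (h2 : c^2+e^2 = 1)
    (hb : 0 ≤ b) (he : 0 < e) (hca : a < c) : a < a*c + b*e := by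
  have hc1 : c < 1 := by nlinarith
  have ha1 : a ≤ 1 := by nlinarith
  rcases le_or_gt a 0 with ha | ha
  · rcases eq_or_lt_of_le ha with rfl | ha'
    · have hb1 : b = 1 := by nlinarith
      simp [hb1]; linarith
    · nlinarith [mul_nonneg hb he.le]
  · have h3 : 1 + c - 2*a^2 > 0 := by nlinarith
    have h4 : (b*e)^2 > (a*(1-c))^2 := by nlinarith
    have h5 : a*(1-c) ≥ 0 := by nlinarith
    nlinarith [mul_nonneg hb he.le]

lemma norm_one_coords (p : Plane) (hp : ‖p‖ = 1) : p 0^2 + p 1^2 = 1 := by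
  have := real_inner_self_eq_norm_sq p
  rw [hp] at this
  simp only [PiLp.inner_apply, RCLike.inner_apply, Fin.sum_univ_two, conj_trivial] at this
  nlinarith [this]

lemma between (p u z : Plane) (hp : ‖p‖=1) (hu : ‖u‖=1) (hz : ‖z‖=1) (s : Plane)
    (hs : s = rotJ p ∨ s = -rotJ p) (hsu : 0 ≤ ⟪s,u⟫) (hsz : 0 < ⟪s,z⟫)
    (hzu : ⟪p,u⟫ < ⟪p,z⟫) : ⟪p,u⟫ < ⟪u,z⟫ := by
  have hP := norm_one_coords p hp
  have hU := norm_one_coords u hu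
  have hZ := norm_one_coords z hz
  simp only [PiLp.inner_apply, RCLike.inner_apply, Fin.sum_univ_two, conj_trivial,
    RingHom.id_apply, starRingEnd_apply, star_trivial] at *
  rcases hs with rfl | rfl
  · simp only [rotJ, PiLp.toLp_apply, Matrix.cons_val_zero, Matrix.cons_val_one, Matrix.head_cons] at hsu hsz
    have := key_ineq (p 0 * u 0 + p 1 * u 1) (-p 1 * u 0 + p 0 * u 1)
      (p 0 * z 0 + p 1 * z 1) (-p 1 * z 0 + p 0 * z 1)
      (by linear_combination (u 0^2 + u 1^2) * hP + hU - hU * 0)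
      (by linear_combination (z 0^2 + z 1^2) * hP + hZ - hZ*0) (by linarith) (by linarith) (by linarith)
    calc u 0 * p 0 + u 1 * p 1 = p 0 * u 0 + p 1 * u 1 := by ring
      _ < _ := this
      _ = z 0 * u 0 + z 1 * u 1 := by linear_combination (u 0 * z 0 + u 1 * z 1) * hP
  · simp only [rotJ, PiLp.neg_apply, PiLp.toLp_apply, Matrix.cons_val_zero, Matrix.cons_val_one,
      Matrix.head_cons] at hsu hsz
    have := key_ineq (p 0 * u 0 + p 1 * u 1) (-(-p 1 * u 0 + p 0 * u 1))
      (p 0 * z 0 + p 1 * z 1) (-(-p 1 * z 0 + p 0 * z 1))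
      (by linear_combination (u 0^2 + u 1^2) * hP + hU - hU * 0)
      (by linear_combination (z 0^2 + z 1^2) * hP + hZ - hZ*0) (by linarith) (by linarith) (by linarith)
    calc u 0 * p 0 + u 1 * p 1 = p 0 * u 0 + p 1 * u 1 := by ring
      _ < _ := this
      _ = z 0 * u 0 + z 1 * u 1 := by linear_combination (u 0 * z 0 + u 1 * z 1) * hP

lemma dist_sq_eq (a b : Plane) (ha : ‖a‖ = 1) (hb : ‖b‖ = 1) :
    dist a b^2 = 2 - 2 * ⟪a,b⟫ := by
  rw [dist_eq_norm, norm_sub_sq_real, ha, hb]; ring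

lemma eq_or_dist_of_rotJ_zero (p q : Plane) (hp : ‖p‖ = 1) (hq : ‖q‖ = 1)
    (h0 : ⟪rotJ p, q⟫ = 0) : p = q ∨ dist p q = 2 := by
  have hP := norm_one_coords p hp
  have hQ := norm_one_coords q hq
  simp only [rotJ, PiLp.toLp_apply, PiLp.inner_apply, RCLike.inner_apply, Fin.sum_univ_two, conj_trivial,
    starRingEnd_apply, star_trivial, Matrix.cons_val_zero, Matrix.cons_val_one,
    Matrix.head_cons] at h0
  have h1 : ⟪p,q⟫ = p 0 * q 0 + p 1 * q 1 := by
    simp [PiLp.inner_apply, RCLike.inner_apply, Fin.sum_univ_two]; ring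
  have hsq : (p 0 * q 0 + p 1 * q 1 - 1) * (p 0 * q 0 + p 1 * q 1 + 1) = 0 := by
    nlinarith [hP, hQ, h0]
  have hd := dist_sq_eq p q hp hq
  rcases mul_eq_zero.mp hsq with h | h
  · left
    have h2 : dist p q ^ 2 = 0 := by rw [hd, h1]; linarith
    exact dist_eq_zero.mp (sq_eq_zero_iff.mp h2)
  · right
    have h2 : dist p q ^ 2 = 4 := by rw [hd, h1]; linarith
    nlinarith [dist_nonneg (x := p) (y := q)]

lemma rotJ_inner_antisymm (p q : Plane) : ⟪rotJ p, q⟫ = - ⟪rotJ q, p⟫ := by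
  simp only [rotJ, PiLp.toLp_apply, PiLp.inner_apply, RCLike.inner_apply, Fin.sum_univ_two, conj_trivial,
    starRingEnd_apply, star_trivial, Matrix.cons_val_zero, Matrix.cons_val_one, Matrix.head_cons]
  ring

lemma finite_of_separated {A : Set Plane} (hA : A ⊆ sphere (0:Plane) 1) {ρ : ℝ} (hρ : 0 < ρ)
    (hsep : ∀ p ∈ A, ∀ q ∈ A, p ≠ q → ρ ≤ dist p q) : A.Finite := by
  obtain ⟨t, htf, hcov⟩ := (totallyBounded_iff.mp
    (isCompact_sphere (0:Plane) 1).totallyBounded) (ρ/2) (by linarith)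
  have hsub : A ⊆ ⋃ y ∈ t, A ∩ ball y (ρ/2) := by
    intro a ha
    have := hcov (hA ha)
    simp only [mem_iUnion] at this ⊢
    obtain ⟨y, hy, hb⟩ := this
    exact ⟨y, hy, ha, hb⟩
  refine Set.Finite.subset (Set.Finite.biUnion htf (fun y _ => ?_)) hsub
  refine Set.Subsingleton.finite (fun a ⟨ha, hab⟩ b ⟨hb, hbb⟩ => ?_)
  by_contra hne
  have h1 := mem_ball.mp hab
  have h2 := mem_ball.mp hbb
  have h3 := dist_triangle a y b
  rw [dist_comm y b] at h3
  linarith [hsep a ha b hb hne]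

lemma net_exists {h : Set Plane} (hcomp : IsCompact h) {ρ : ℝ} (hρ : 0 < ρ) :
    ∃ N ⊆ h, N.Finite ∧ ∀ z ∈ h, ∃ q ∈ N, dist z q < ρ := by
  obtain ⟨N, hNh, hNf, hcov⟩ := hcomp.elim_finite_subcover_image
    (fun z _ => isOpen_ball (x := z) (ε := ρ))
    (fun z hz => mem_biUnion hz (mem_ball_self hρ))
  refine ⟨N, hNh, hNf, fun z hz => ?_⟩
  obtain ⟨q, hq, hb⟩ := mem_iUnion₂.mp (hcov hz)
  exact ⟨q, hq, mem_ball.mp hb⟩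

lemma local_hull (h : Set Plane) (hcl : IsClosed h) (hsub : h ⊆ sphere (0:Plane) 1)
    (x : Plane) (hx1 : x ∈ convexHull ℝ h) (hx2 : ‖x‖ < 1) :
    ∃ F : Set Plane, F ⊆ h ∧ F.Finite ∧
      convexHull ℝ h ∩ ball x ((1 - ‖x‖)/2) ⊆ convexHull ℝ F := by
  have hne : h.Nonempty := by
    rcases Set.eq_empty_or_nonempty h with rfl | hne
    · simp at hx1
    · exact hne
  have hcomp : IsCompact h :=
    (isCompact_sphere (0:Plane) 1).of_isClosed_subset hcl hsub
  have hunit : ∀ z ∈ h, ‖z‖ = 1 := fun z hz => by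
    have := hsub hz; rwa [mem_sphere_zero_iff_norm] at this
  set r : ℝ := (1 + ‖x‖)/2 with hrdef
  have hxnn : 0 ≤ ‖x‖ := norm_nonneg x
  have hr1 : r < 1 := by rw [hrdef]; linarith
  have hrr : (1 - r)/4 > 0 := by linarith
  set ρ : ℝ := Real.sqrt ((1-r)/4) with hρdef
  have hρpos : 0 < ρ := Real.sqrt_pos.mpr hrr
  have hρ2 : ρ^2 = (1-r)/4 := Real.sq_sqrt hrr.le
  have hρ2lt : ρ < 2 := by nlinarith
  obtain ⟨N, hNh, hNf, hNcov⟩ := net_exists hcomp hρpos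
  set Ap : Set Plane := {p | p ∈ h ∧ ∀ z ∈ h, dist z p < ρ → ⟪rotJ p, z⟫ ≤ 0} with hApdef
  set Am : Set Plane := {p | p ∈ h ∧ ∀ z ∈ h, dist z p < ρ → 0 ≤ ⟪rotJ p, z⟫} with hAmdef
  have hAph : Ap ⊆ h := fun p hp => hp.1
  have hAmh : Am ⊆ h := fun p hp => hp.1
  have hApf : Ap.Finite := by
    refine finite_of_separated (fun p hp => hsub (hAph hp)) hρpos ?_
    intro p hp q hq hpq
    by_contra hlt
    push_neg at hlt
    have h1 : ⟪rotJ p, q⟫ ≤ 0 := hp.2 q hq.1 (by rwa [dist_comm])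
    have h2 : ⟪rotJ q, p⟫ ≤ 0 := hq.2 p hp.1 hlt
    have h0 : ⟪rotJ p, q⟫ = 0 := by
      have := rotJ_inner_antisymm p q
      linarith
    rcases eq_or_dist_of_rotJ_zero p q (hunit p hp.1) (hunit q hq.1) h0 with h | h
    · exact hpq h
    · rw [h] at hlt; linarith
  have hAmf : Am.Finite := by
    refine finite_of_separated (fun p hp => hsub (hAmh hp)) hρpos ?_
    intro p hp q hq hpq
    by_contra hlt
    push_neg at hlt
    have h1 : 0 ≤ ⟪rotJ p, q⟫ := hp.2 q hq.1 (by rwa [dist_comm])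
    have h2 : 0 ≤ ⟪rotJ q, p⟫ := hq.2 p hp.1 hlt
    have h0 : ⟪rotJ p, q⟫ = 0 := by
      have := rotJ_inner_antisymm p q
      linarith
    rcases eq_or_dist_of_rotJ_zero p q (hunit p hp.1) (hunit q hq.1) h0 with h | h
    · exact hpq h
    · rw [h] at hlt; linarith
  refine ⟨N ∪ Ap ∪ Am, union_subset (union_subset hNh hAph) hAmh,
    (hNf.union hApf).union hAmf, ?_⟩
  set F : Set Plane := N ∪ Ap ∪ Am with hFdef
  rintro y ⟨hyh, hyb⟩
  by_contra hy
  have hyr : ‖y‖ < r := by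
    have hd : dist y x < (1-‖x‖)/2 := mem_ball.mp hyb
    have : ‖y‖ ≤ ‖y - x‖ + ‖x‖ := by
      have := norm_add_le (y - x) x
      rwa [sub_add_cancel] at this
    rw [← dist_eq_norm] at this
    rw [hrdef]; linarith
  have hFcl : IsClosed (convexHull ℝ F) :=
    (((hNf.union hApf).union hAmf).isCompact_convexHull (𝕜 := ℝ)).isClosed
  obtain ⟨f, u, hfu, huy⟩ :=
    geometric_hahn_banach_closed_point (convex_convexHull ℝ F) hFcl hy
  set v : Plane := (InnerProductSpace.toDual ℝ Plane).symm f with hvdef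
  have hv : ∀ a : Plane, ⟪v, a⟫ = f a := fun a =>
    InnerProductSpace.toDual_symm_apply
  have hvne : v ≠ 0 := by
    obtain ⟨q0, hq0⟩ := hne
    obtain ⟨q, hqN, _⟩ := hNcov q0 hq0
    intro h0
    have hfq : f q = 0 := by rw [← hv q, h0, inner_zero_left]
    have hfy : f y = 0 := by rw [← hv y, h0, inner_zero_left]
    have := hfu q (subset_convexHull ℝ F (Or.inl (Or.inl hqN)))
    rw [hfq] at this; rw [hfy] at huy
    linarith
  set w : Plane := ‖v‖⁻¹ • v with hwdef
  have hw : ‖w‖ = 1 := norm_smul_inv_norm hvne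
  have hsepF : ∀ q ∈ F, ⟪w, q⟫ < ⟪w, y⟫ := by
    intro q hq
    have h1 : f q < f y := lt_trans (hfu q (subset_convexHull ℝ F hq)) huy
    have h2 : ⟪v,q⟫ < ⟪v,y⟫ := by rw [hv, hv]; exact h1
    have h3 : (0:ℝ) < ‖v‖⁻¹ := inv_pos.mpr (norm_pos_iff.mpr hvne)
    have h4 := mul_lt_mul_of_pos_left h2 h3
    have e1 : ⟪w,q⟫ = ‖v‖⁻¹ * ⟪v,q⟫ := by rw [hwdef, real_inner_smul_left]
    have e2 : ⟪w,y⟫ = ‖v‖⁻¹ * ⟪v,y⟫ := by rw [hwdef, real_inner_smul_left]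
    linarith
  have hcont : Continuous fun z : Plane => ⟪w, z⟫ := continuous_const.inner continuous_id
  obtain ⟨p₀, hp₀h, hp₀max⟩ := hcomp.exists_isMaxOn hne hcont.continuousOn
  have hmax : ∀ z ∈ h, ⟪w,z⟫ ≤ ⟪w,p₀⟫ := fun z hz => hp₀max hz
  have hp₀1 : ‖p₀‖ = 1 := hunit p₀ hp₀h
  have hyle : ⟪w,y⟫ ≤ ⟪w,p₀⟫ := by
    have hhalf : convexHull ℝ h ⊆ {z : Plane | ⟪w,z⟫ ≤ ⟪w,p₀⟫} :=
      convexHull_min hmax (convex_halfSpace_le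
        ⟨fun a b => inner_add_right w a b, fun c a => by
          rw [real_inner_smul_right, smul_eq_mul]⟩ _)
    exact hhalf hyh
  have hyr2 : ⟪w,y⟫ < r := by
    have h1 : ⟪w,y⟫ ≤ ‖w‖ * ‖y‖ := real_inner_le_norm w y
    rw [hw, one_mul] at h1
    linarith
  rcases lt_or_ge (dist w p₀) ρ with hcase | hcase
  · obtain ⟨q, hqN, hqd⟩ := hNcov p₀ hp₀h
    have hq1 : ‖q‖ = 1 := hunit q (hNh hqN)
    have hdwq : dist w q < 2*ρ := by
      have := dist_triangle w p₀ q
      linarith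
    have hlow : 1 - 2*ρ^2 < ⟪w,q⟫ := by
      have hd := dist_sq_eq w q hw hq1
      nlinarith [dist_nonneg (x := w) (y := q)]
    have h2 : ⟪w,q⟫ < ⟪w,y⟫ := hsepF q (Or.inl (Or.inl hqN))
    have : 1 - 2*ρ^2 = (1+r)/2 := by rw [hρ2]; ring
    linarith
  · have hbetween : ∀ (s : Plane), s = rotJ p₀ ∨ s = -rotJ p₀ → 0 ≤ ⟪s, w⟫ →
        ∀ z ∈ h, dist z p₀ < ρ → ⟪s, z⟫ ≤ 0 := by
      intro s hs hsw z hz hdz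
      by_contra hpos
      push_neg at hpos
      have hz1 := hunit z hz
      have hin : ⟪p₀,w⟫ < ⟪p₀,z⟫ := by
        have h1 := dist_sq_eq z p₀ hz1 hp₀1
        have h2 := dist_sq_eq w p₀ hw hp₀1
        have h3 : dist z p₀ < dist w p₀ := lt_of_lt_of_le hdz hcase
        have h4 : ⟪w,p₀⟫ < ⟪z,p₀⟫ := by
          nlinarith [dist_nonneg (x := z) (y := p₀), dist_nonneg (x := w) (y := p₀)]
        have c1 : ⟪p₀,w⟫ = ⟪w,p₀⟫ := real_inner_comm _ _
        have c2 : ⟪p₀,z⟫ = ⟪z,p₀⟫ := real_inner_comm _ _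
        linarith
      have hb := between p₀ w z hp₀1 hw hz1 s hs hsw hpos hin
      have hm := hmax z hz
      have c2 : ⟪p₀,w⟫ = ⟪w,p₀⟫ := real_inner_comm _ _
      linarith
    rcases le_or_gt 0 ⟪rotJ p₀, w⟫ with hside | hside
    · have hpA : p₀ ∈ Ap :=
        ⟨hp₀h, fun z hz hdz => hbetween (rotJ p₀) (Or.inl rfl) hside z hz hdz⟩
      have := hsepF p₀ (Or.inl (Or.inr hpA))
      linarith
    · have hside' : 0 ≤ ⟪-rotJ p₀, w⟫ := by
        rw [inner_neg_left]; linarith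
      have hpA : p₀ ∈ Am := by
        refine ⟨hp₀h, fun z hz hdz => ?_⟩
        have := hbetween (-rotJ p₀) (Or.inr rfl) hside' z hz hdz
        rw [inner_neg_left] at this
        linarith
      have := hsepF p₀ (Or.inr hpA)
      linarith

theorem stmt_14 (h : Set Plane) (hcl : IsClosed h)
    (hsub : h ⊆ Metric.sphere 0 1) :
    (∀ x ∈ convexHull ℝ h ∩ Metric.ball (0 : Plane) 1,
      ∃ F : Set Plane, F ⊆ h ∧ F.Finite ∧
        ∃ U ∈ nhdsWithin x (convexHull ℝ h), U ⊆ convexHull ℝ F) ∧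
    (∀ K : Set Plane, K ⊆ convexHull ℝ h ∩ Metric.ball (0 : Plane) 1 →
      IsCompact K → ∃ F : Set Plane, F ⊆ h ∧ F.Finite ∧ K ⊆ convexHull ℝ F) := by
  constructor
  · rintro x ⟨hx1, hx2⟩
    rw [mem_ball_zero_iff] at hx2
    obtain ⟨F, hFh, hFf, hFsub⟩ := local_hull h hcl hsub x hx1 hx2
    refine ⟨F, hFh, hFf, convexHull ℝ h ∩ ball x ((1 - ‖x‖)/2), ?_, hFsub⟩
    exact inter_mem_nhdsWithin _ (ball_mem_nhds x (by linarith))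
  · intro K hK hKc
    have H : ∀ x ∈ K, ∃ F : Set Plane, F ⊆ h ∧ F.Finite ∧
        convexHull ℝ h ∩ ball x ((1 - ‖x‖)/2) ⊆ convexHull ℝ F := by
      intro x hx
      obtain ⟨hx1, hx2⟩ := hK hx
      rw [mem_ball_zero_iff] at hx2
      exact local_hull h hcl hsub x hx1 hx2
    choose! F hF1 hF2 hF3 using H
    obtain ⟨t, htK, htf, htcov⟩ := hKc.elim_finite_subcover_image
      (fun x (_ : x ∈ K) => isOpen_ball (x := x) (ε := (1 - ‖x‖)/2))
      (fun x hx => by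
        have hx2 := (hK hx).2
        rw [mem_ball_zero_iff] at hx2
        exact mem_biUnion hx (mem_ball_self (by linarith)))
    refine ⟨⋃ x ∈ t, F x, ?_, ?_, ?_⟩
    · exact iUnion₂_subset fun x hx => hF1 x (htK hx)
    · exact htf.biUnion fun x hx => hF2 x (htK hx)
    · intro y hy
      obtain ⟨x, hxt, hxb⟩ := mem_iUnion₂.mp (htcov hy)
      have : y ∈ convexHull ℝ (F x) :=
        hF3 x (htK hxt) ⟨(hK hy).1, hxb⟩
      exact convexHull_mono (subset_biUnion_of_mem hxt) this
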